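/- Let f: ℝⁿ → ℝⁿ satisfy the one-sided condition (u − v)ᵀ(f(u) − f(v)) ≥ σ(u − v)ᵀ(u − v) for all u, v ∈ ℝⁿ and some constant σ ∈ ℝ. Let u, v solve u' = f(u) + θ, v' = f(v) + ϑ with constant inputs. Then for any μ > 0 with 2σ − μ ≠ 0 and all t ≥ 0: ‖u(t) − v(t)‖² ≥ exp((2σ − μ)t)·‖u₀ − v₀‖² − (‖θ − ϑ‖²/μ)·(exp((2σ − μ)t) − 1)/(2σ − μ). -/

import Mathlib

open scoped RealInnerProductSpace

theorem stmt1 {n : ℕ} (f : EuclideanSpace ℝ (Fin n) → EuclideanSpace ℝ (Fin n))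
    (σ : ℝ)
    (hos : ∀ x y : EuclideanSpace ℝ (Fin n), ⟪x - y, f x - f y⟫ ≥ σ * ‖x - y‖ ^ 2)
    (θ ϑ : EuclideanSpace ℝ (Fin n))
    (u v : ℝ → EuclideanSpace ℝ (Fin n))
    (hu : ∀ t, 0 ≤ t → HasDerivAt u (f (u t) + θ) t)
    (hv : ∀ t, 0 ≤ t → HasDerivAt v (f (v t) + ϑ) t) :
    ∀ μ : ℝ, 0 < μ → 2 * σ - μ ≠ 0 → ∀ t, 0 ≤ t →
      ‖u t - v t‖ ^ 2 ≥
        Real.exp ((2 * σ - μ) * t) * ‖u 0 - v 0‖ ^ 2 -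
          (‖θ - ϑ‖ ^ 2 / μ) * ((Real.exp ((2 * σ - μ) * t) - 1) / (2 * σ - μ)) := by
  intro μ hμ hK t ht
  set K : ℝ := 2 * σ - μ with hKdef
  set ε : ℝ := ‖θ - ϑ‖ ^ 2 / μ with hεdef
  set w : ℝ → EuclideanSpace ℝ (Fin n) := fun x => u x - v x with hw
  set g : ℝ → ℝ := fun x => ‖w x‖ ^ 2 with hg
  -- derivative of g
  have hgderiv : ∀ x, 0 ≤ x →
      HasDerivAt g (2 * ⟪w x, (f (u x) - f (v x)) + (θ - ϑ)⟫) x := by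
    intro x hx
    have hwderiv : HasDerivAt w ((f (u x) - f (v x)) + (θ - ϑ)) x := by
      have := (hu x hx).sub (hv x hx)
      refine this.congr_deriv ?_
      abel
    have hin := HasDerivAt.inner ℝ hwderiv hwderiv
    have : (fun s => ⟪w s, w s⟫) = g := by
      funext s
      exact real_inner_self_eq_norm_sq (w s)
    rw [this] at hin
    refine hin.congr_deriv ?_
    rw [real_inner_comm]
    ring
  -- lower bound on g'
  have hbound : ∀ x, 0 ≤ x →
      2 * ⟪w x, (f (u x) - f (v x)) + (θ - ϑ)⟫ ≥ K * g x - ε := by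
    intro x hx
    have h1 : ⟪w x, f (u x) - f (v x)⟫ ≥ σ * ‖w x‖ ^ 2 := hos (u x) (v x)
    have h2 : ⟪w x, θ - ϑ⟫ ≥ -(‖w x‖ * ‖θ - ϑ‖) := by
      have := abs_real_inner_le_norm (w x) (θ - ϑ)
      linarith [neg_abs_le (⟪w x, θ - ϑ⟫ : ℝ)]
    have h3 : 2 * (‖w x‖ * ‖θ - ϑ‖) ≤ μ * ‖w x‖ ^ 2 + ‖θ - ϑ‖ ^ 2 / μ := by
      have hsq := sq_nonneg (μ * ‖w x‖ - ‖θ - ϑ‖)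
      have h4 : (2 * (‖w x‖ * ‖θ - ϑ‖) - μ * ‖w x‖ ^ 2) * μ ≤ ‖θ - ϑ‖ ^ 2 := by nlinarith
      have h5 := (div_le_div_iff_of_pos_right hμ).mpr h4
      have h6 := (le_div_iff₀ hμ).mpr h4
      linarith
    have hginner : ⟪w x, (f (u x) - f (v x)) + (θ - ϑ)⟫
        = ⟪w x, f (u x) - f (v x)⟫ + ⟪w x, θ - ϑ⟫ := inner_add_right _ _ _
    have hgx : g x = ‖w x‖ ^ 2 := rfl
    rw [hginner, hgx, hKdef, hεdef]
    nlinarith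
  -- apply Gronwall to -g
  have key := le_gronwallBound_of_liminf_deriv_right_le (a := 0) (b := t)
    (f := fun x => -g x) (f' := fun x => -(2 * ⟪w x, (f (u x) - f (v x)) + (θ - ϑ)⟫))
    (δ := -g 0) (K := K) (ε := ε)
    (by
      apply ContinuousOn.neg
      intro x hx
      exact ((hgderiv x hx.1).continuousAt).continuousWithinAt)
    (by
      intro x hx r hr
      have hder : HasDerivWithinAt (fun x => -g x)
          (-(2 * ⟪w x, (f (u x) - f (v x)) + (θ - ϑ)⟫)) (Set.Ici x) x :=
        ((hgderiv x hx.1).neg).hasDerivWithinAt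
      exact hder.liminf_right_slope_le hr)
    le_rfl
    (by
      intro x hx
      have hb := hbound x hx.1
      show -(2 * ⟪w x, (f (u x) - f (v x)) + (θ - ϑ)⟫) ≤ K * -g x + ε
      have hrw : K * -g x = -(K * g x) := by ring
      rw [hrw]
      linarith)
    t (Set.mem_Icc.2 ⟨ht, le_rfl⟩)
  rw [gronwallBound_of_K_ne_0 hK] at key
  simp only [sub_zero] at key
  have : -g t ≤ -g 0 * Real.exp (K * t) + ε / K * (Real.exp (K * t) - 1) := key
  have hgoal : g t ≥ Real.exp (K * t) * g 0 - ε * ((Real.exp (K * t) - 1) / K) := by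
    have hεK : ε / K * (Real.exp (K * t) - 1) = ε * ((Real.exp (K * t) - 1) / K) := by
      field_simp
    nlinarith [this]
  exact hgoal
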